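/- Let N ≥ 2, s ∈ (0,1), and c₃, c₄ > 0. Then for all z ∈ (0,2), ∫_0^∞ t^{-(N/2+1-s)} e^{-z²/(4t) - c₃ z - c₄ t} dt ≥ C z^{-(N-2s)}, where C > 0 depends only on N, s, c₃, c₄. -/

import Mathlib

open MeasureTheory Real Set

/-- For c₃, c₄ > 0 there is C > 0 (depending only on N, s, c₃, c₄) such that
for all z ∈ (0,2), ∫_0^∞ t^{-(N/2+1-s)} e^{-z²/(4t) - c₃z - c₄t} dt ≥ C z^{-(N-2s)}. -/
theorem stmt11 (N : ℕ) (s c₃ c₄ : ℝ) (hN : 2 ≤ N) (hs0 : 0 < s) (hs1 : s < 1)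
    (hc₃ : 0 < c₃) (hc₄ : 0 < c₄) :
    ∃ C > 0, ∀ z ∈ Ioo (0 : ℝ) 2,
      C * z ^ (-((N : ℝ) - 2 * s)) ≤
        ∫ t in Ioi (0 : ℝ),
          t ^ (-((N : ℝ) / 2 + 1 - s)) * Real.exp (-z ^ 2 / (4 * t) - c₃ * z - c₄ * t) := by
  set a : ℝ := -((N : ℝ) / 2 + 1 - s) with ha
  have hN2 : (2 : ℝ) ≤ (N : ℝ) := by exact_mod_cast hN
  have haneg : a ≤ -1 := by rw [ha]; nlinarith
  have haN : 0 ≤ a + N := by rw [ha]; nlinarith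
  refine ⟨Real.exp (-(1/4) - 2*c₃ - 8*c₄) * (2:ℝ) ^ a, by positivity, ?_⟩
  rintro z ⟨hz0, hz2⟩
  set f : ℝ → ℝ := fun t => t ^ a * Real.exp (-z ^ 2 / (4 * t) - c₃ * z - c₄ * t) with hf
  have hz2pos : (0:ℝ) < z ^ 2 := by positivity
  have hfnonneg : ∀ t ∈ Ioi (0:ℝ), 0 ≤ f t := fun t ht =>
    mul_nonneg (Real.rpow_nonneg (le_of_lt ht) _) (Real.exp_pos _).le
  have hmeas : Measurable f := by fun_prop
  -- Integrability on Ioi 0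
  have hint : IntegrableOn f (Ioi (0:ℝ)) := by
    have h01 : IntegrableOn f (Ioc (0:ℝ) 1) := by
      refine Measure.integrableOn_of_bounded (M := (N.factorial : ℝ) * (z^2/4)⁻¹ ^ N)
        (by simp [Real.volume_Ioc]) hmeas.aestronglyMeasurable ?_
      filter_upwards [ae_restrict_mem measurableSet_Ioc] with t ht
      obtain ⟨ht0, ht1⟩ := ht
      rw [Real.norm_of_nonneg (hfnonneg t ht0)]
      have hε : (0:ℝ) < z^2/4 := by positivity
      have hx : (0:ℝ) ≤ (z^2/4) / t := by positivity
      have hexp1 : Real.exp (-z ^ 2 / (4 * t) - c₃ * z - c₄ * t) ≤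
          Real.exp (-((z^2/4) / t)) := by
        apply Real.exp_le_exp.2
        have : -z ^ 2 / (4 * t) = -((z^2/4) / t) := by ring
        rw [this]
        nlinarith [mul_pos hc₃ hz0, mul_pos hc₄ ht0]
      have hexp2 : Real.exp (-((z^2/4) / t)) ≤ (N.factorial : ℝ) * (t / (z^2/4)) ^ N := by
        have hxpos : (0:ℝ) < (z^2/4) / t := by positivity
        have h1 : ((z^2/4)/t) ^ N / (N.factorial : ℝ) ≤ Real.exp ((z^2/4)/t) :=
          Real.pow_div_factorial_le_exp _ hx N
        rw [Real.exp_neg]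
        calc (Real.exp ((z^2/4)/t))⁻¹ ≤ (((z^2/4)/t) ^ N / (N.factorial : ℝ))⁻¹ := by
              apply inv_anti₀ (by positivity) h1
          _ = (N.factorial : ℝ) * (t / (z^2/4)) ^ N := by
              have hfac : (N.factorial : ℝ) ≠ 0 := Nat.cast_ne_zero.2 N.factorial_ne_zero
              rw [inv_div, div_eq_mul_inv, ← inv_pow, inv_div]
      calc f t ≤ t ^ a * ((N.factorial : ℝ) * (t / (z^2/4)) ^ N) := by
            exact mul_le_mul_of_nonneg_left (hexp1.trans hexp2) (Real.rpow_nonneg ht0.le _)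
        _ = (N.factorial : ℝ) * (z^2/4)⁻¹ ^ N * (t ^ a * t ^ N) := by
            rw [div_pow, inv_pow]; ring
        _ ≤ (N.factorial : ℝ) * (z^2/4)⁻¹ ^ N * 1 := by
            apply mul_le_mul_of_nonneg_left _ (by positivity)
            rw [← Real.rpow_natCast t N, ← Real.rpow_add ht0]
            exact Real.rpow_le_one ht0.le ht1 haN
        _ = (N.factorial : ℝ) * (z^2/4)⁻¹ ^ N := mul_one _
    have h1i : IntegrableOn f (Ioi (1:ℝ)) := by
      apply Integrable.mono' (exp_neg_integrableOn_Ioi 1 hc₄) hmeas.aestronglyMeasurable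
      filter_upwards [ae_restrict_mem measurableSet_Ioi] with t ht
      have ht0 : (0:ℝ) < t := lt_trans one_pos ht
      rw [Real.norm_of_nonneg (hfnonneg t ht0)]
      calc f t ≤ 1 * Real.exp (-c₄ * t) := by
            apply mul_le_mul
            · exact Real.rpow_le_one_of_one_le_of_nonpos (le_of_lt ht) (haneg.trans (by norm_num))
            · apply Real.exp_le_exp.2
              have h1 : 0 ≤ z ^ 2 / (4 * t) := by positivity
              have h2 : -z ^ 2 / (4 * t) = -(z ^ 2 / (4 * t)) := by ring
              rw [h2]
              nlinarith [mul_pos hc₃ hz0]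
            · exact (Real.exp_pos _).le
            · norm_num
        _ = Real.exp (-c₄ * t) := one_mul _
    rw [← Ioc_union_Ioi_eq_Ioi (zero_le_one (α := ℝ))]
    exact h01.union h1i
  -- the constant lower bound on Ioc (z^2) (2 z^2)
  set m : ℝ := (2 * z^2) ^ a * Real.exp (-(1/4) - 2*c₃ - 8*c₄) with hm
  have key1 : m * z ^ 2 ≤ ∫ t in Ioc (z^2) (2*z^2), f t := by
    have hμ : (volume (Ioc (z^2) (2*z^2))).toReal = z ^ 2 := by
      rw [Real.volume_Ioc, ENNReal.toReal_ofReal (by nlinarith)]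
      ring
    have main := setIntegral_ge_of_const_le (c := m) (μ := volume) (f := f)
      (measurableSet_Ioc (a := z^2) (b := 2*z^2))
      (by rw [Real.volume_Ioc]; exact ENNReal.ofReal_ne_top) ?_ ?_
    · rw [measureReal_def, hμ, smul_eq_mul] at main; linarith
    · intro t ht
      obtain ⟨ht1, ht2⟩ := ht
      have ht0 : (0:ℝ) < t := lt_trans hz2pos ht1
      apply mul_le_mul
      · exact Real.rpow_le_rpow_of_nonpos ht0 ht2 (haneg.trans (by norm_num))
      · apply Real.exp_le_exp.2
        have h1 : z ^ 2 / (4 * t) ≤ 1/4 := by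
          rw [div_le_div_iff₀ (by positivity) (by norm_num)]
          nlinarith
        have h2 : c₃ * z ≤ 2 * c₃ := by nlinarith
        have hz4 : z ^ 2 < 4 := by nlinarith
        have h3 : c₄ * t ≤ 8 * c₄ := by nlinarith [mul_le_mul_of_nonneg_left ht2 hc₄.le]
        have : -z ^ 2 / (4 * t) = -(z^2/(4*t)) := by ring
        rw [this]; linarith
      · exact (Real.exp_pos _).le
      · positivity
    · exact hint.mono_set (fun t ht => lt_trans hz2pos ht.1)
  have key2 : ∫ t in Ioc (z^2) (2*z^2), f t ≤ ∫ t in Ioi (0:ℝ), f t := by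
    apply setIntegral_mono_set hint
    · exact (ae_restrict_mem measurableSet_Ioi).mono fun t ht => hfnonneg t ht
    · exact HasSubset.Subset.eventuallyLE (fun t ht => lt_trans hz2pos ht.1)
  refine le_trans (le_of_eq ?_) (key1.trans key2)
  have hz2a : (2*z^2:ℝ)^a = 2^a * z ^ (2*a) := by
    rw [Real.mul_rpow (by norm_num) hz2pos.le, ← Real.rpow_natCast z 2,
      ← Real.rpow_mul hz0.le]
    norm_num
  have hzz : z ^ (-((N:ℝ) - 2*s)) = z ^ (2*a) * z ^ (2:ℕ) := by
    rw [← Real.rpow_natCast z 2, ← Real.rpow_add hz0]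
    congr 1
    rw [ha]; push_cast; ring
  rw [hzz, hm, hz2a]; ring
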